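/- Let ρ_{AB} = (1/2)(|0⟩⟨0|_A ⊗ ρ'_B + |1⟩⟨1|_A ⊗ ρ''_B) be a classical-quantum state with A a qubit, and let {P_B, 1−P_B} be any two-outcome POVM on B with Tr(ρ_B P_B) = 1/2 where ρ_B = (ρ'_B + ρ''_B)/2. Then the two post-measurement states on A satisfy ‖ρ_{A,1} − ρ_{A,2}‖_1 = 2|Tr((ρ'_B − ρ''_B)P_B)| ≤ ‖ρ'_B − ρ''_B‖_1; consequently C_B^{(2)}(ρ_{AB}) ≤ C_A^{(2)}(ρ_{AB}) = ‖ρ'_B − ρ''_B‖_1/4. -/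

import Mathlib

open Matrix BigOperators ComplexOrder Kronecker

def IsDensity {n : Type*} [Fintype n] [DecidableEq n] (ρ : Matrix n n ℂ) : Prop :=
  ρ.PosSemidef ∧ ρ.trace = 1

noncomputable def traceNorm {d : ℕ} (A : Matrix (Fin d) (Fin d) ℂ) : ℝ :=
  if h : A.IsHermitian then ∑ i, |h.eigenvalues i| else 0

noncomputable def ptraceA {dA dB : ℕ}
    (M : Matrix (Fin dA × Fin dB) (Fin dA × Fin dB) ℂ) : Matrix (Fin dB) (Fin dB) ℂ :=
  Matrix.of fun i j => ∑ a, M (a, i) (a, j)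

/-- The correlation measure `C_A^{(2)}`: the supremum, over two-outcome POVMs on `A`
that are maximally entropic for `ρ` (both outcome probabilities equal `1/2`), of a
quarter of the trace distance of the two post-measurement states on `B`. -/
noncomputable def CA2 {dA dB : ℕ}
    (ρ : Matrix (Fin dA × Fin dB) (Fin dA × Fin dB) ℂ) : ℝ :=
  sSup { x : ℝ | ∃ P₁ P₂ : Matrix (Fin dA) (Fin dA) ℂ,
    P₁.PosSemidef ∧ P₂.PosSemidef ∧ P₁ + P₂ = 1 ∧
    (ρ * (P₁ ⊗ₖ (1 : Matrix (Fin dB) (Fin dB) ℂ))).trace = 1/2 ∧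
    (ρ * (P₂ ⊗ₖ (1 : Matrix (Fin dB) (Fin dB) ℂ))).trace = 1/2 ∧
    x = traceNorm ((2 : ℂ) • ptraceA (ρ * (P₁ ⊗ₖ (1 : Matrix (Fin dB) (Fin dB) ℂ)))
          - (2 : ℂ) • ptraceA (ρ * (P₂ ⊗ₖ (1 : Matrix (Fin dB) (Fin dB) ℂ)))) / 4 }


/-- Partial trace over the second (B) factor of a bipartite matrix. -/
noncomputable def ptraceB {dA dB : ℕ}
    (M : Matrix (Fin dA × Fin dB) (Fin dA × Fin dB) ℂ) : Matrix (Fin dA) (Fin dA) ℂ :=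
  Matrix.of fun i j => ∑ b, M (i, b) (j, b)

/-- The correlation measure `C_B^{(2)}`, defined with measurements on `B`. -/
noncomputable def CB2 {dA dB : ℕ}
    (ρ : Matrix (Fin dA × Fin dB) (Fin dA × Fin dB) ℂ) : ℝ :=
  sSup { x : ℝ | ∃ Q₁ Q₂ : Matrix (Fin dB) (Fin dB) ℂ,
    Q₁.PosSemidef ∧ Q₂.PosSemidef ∧ Q₁ + Q₂ = 1 ∧
    (ρ * ((1 : Matrix (Fin dA) (Fin dA) ℂ) ⊗ₖ Q₁)).trace = 1/2 ∧
    (ρ * ((1 : Matrix (Fin dA) (Fin dA) ℂ) ⊗ₖ Q₂)).trace = 1/2 ∧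
    x = traceNorm ((2 : ℂ) • ptraceB (ρ * ((1 : Matrix (Fin dA) (Fin dA) ℂ) ⊗ₖ Q₁))
          - (2 : ℂ) • ptraceB (ρ * ((1 : Matrix (Fin dA) (Fin dA) ℂ) ⊗ₖ Q₂))) / 4 }

lemma traceNorm_nonneg {d : ℕ} (A : Matrix (Fin d) (Fin d) ℂ) : 0 ≤ traceNorm A := by
  unfold traceNorm
  split
  · exact Finset.sum_nonneg fun i _ => abs_nonneg _
  · exact le_refl 0

lemma trace_diagonal_mul {n : ℕ} (v : Fin n → ℂ) (M : Matrix (Fin n) (Fin n) ℂ) :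
    (Matrix.diagonal v * M).trace = ∑ i, v i * M i i := by
  simp [Matrix.trace, Matrix.diag, Matrix.mul_apply, Matrix.diagonal]

lemma psd_diag_re_nonneg {n : ℕ} {M : Matrix (Fin n) (Fin n) ℂ} (h : M.PosSemidef) (i : Fin n) :
    0 ≤ (M i i).re := by
  have := h.dotProduct_mulVec_nonneg (Pi.single i 1)
  rw [Complex.nonneg_iff] at this
  simpa [dotProduct, Matrix.mulVec, Pi.single_apply] using this.1

section Master
variable {n : ℕ}

lemma re_trace_mul_le {A S : Matrix (Fin n) (Fin n) ℂ} (hA : A.IsHermitian)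
    (h1 : ((1 : Matrix (Fin n) (Fin n) ℂ) - S).PosSemidef)
    (h2 : ((1 : Matrix (Fin n) (Fin n) ℂ) + S).PosSemidef) :
    |((A * S).trace).re| ≤ traceNorm A := by
  classical
  set V : Matrix (Fin n) (Fin n) ℂ := (hA.eigenvectorUnitary : Matrix (Fin n) (Fin n) ℂ) with hV
  have hVmem : V ∈ Matrix.unitaryGroup (Fin n) ℂ := (hA.eigenvectorUnitary).2
  have hVsV : star V * V = 1 := (Matrix.mem_unitaryGroup_iff').mp hVmem
  have hVVs : V * star V = 1 := (Matrix.mem_unitaryGroup_iff).mp hVmem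
  set D : Matrix (Fin n) (Fin n) ℂ :=
    Matrix.diagonal (RCLike.ofReal ∘ hA.eigenvalues) with hD
  set Q : Matrix (Fin n) (Fin n) ℂ := star V * S * V with hQ
  have hspec : A = V * D * star V := hA.spectral_theorem
  have hAS : A * S = V * (D * Q) * star V := by
    rw [hspec, hQ]
    simp only [Matrix.mul_assoc, hVVs, Matrix.mul_one]
  have htr : (A * S).trace = (D * Q).trace := by
    rw [hAS, Matrix.trace_mul_cycle, ← Matrix.mul_assoc, hVsV, Matrix.one_mul]
  have hQbound : ∀ i, |(Q i i).re| ≤ 1 := by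
    intro i
    have hc1 : ((1 : Matrix (Fin n) (Fin n) ℂ) - Q).PosSemidef := by
      have h := h1.conjTranspose_mul_mul_same (B := V)
      have he : Vᴴ * ((1 : Matrix (Fin n) (Fin n) ℂ) - S) * V = 1 - Q := by
        rw [Matrix.mul_sub, Matrix.mul_one, Matrix.sub_mul, hQ,
          ← Matrix.star_eq_conjTranspose, hVsV]
      rwa [he] at h
    have hc2 : ((1 : Matrix (Fin n) (Fin n) ℂ) + Q).PosSemidef := by
      have h := h2.conjTranspose_mul_mul_same (B := V)
      have he : Vᴴ * ((1 : Matrix (Fin n) (Fin n) ℂ) + S) * V = 1 + Q := by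
        rw [Matrix.mul_add, Matrix.mul_one, Matrix.add_mul, hQ,
          ← Matrix.star_eq_conjTranspose, hVsV]
      rwa [he] at h
    have b1 := psd_diag_re_nonneg hc1 i
    have b2 := psd_diag_re_nonneg hc2 i
    rw [Matrix.sub_apply, Matrix.one_apply_eq, Complex.sub_re, Complex.one_re] at b1
    rw [Matrix.add_apply, Matrix.one_apply_eq, Complex.add_re, Complex.one_re] at b2
    rw [abs_le]; constructor <;> linarith
  have hsum : ((A * S).trace).re = ∑ i, hA.eigenvalues i * (Q i i).re := by
    rw [htr, hD, trace_diagonal_mul, Complex.re_sum]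
    refine Finset.sum_congr rfl fun i _ => ?_
    simp [Complex.mul_re]
  rw [hsum]
  unfold traceNorm
  rw [dif_pos hA]
  calc |∑ i, hA.eigenvalues i * (Q i i).re|
      ≤ ∑ i, |hA.eigenvalues i * (Q i i).re| := Finset.abs_sum_le_sum_abs _ _
    _ ≤ ∑ i, |hA.eigenvalues i| := by
        refine Finset.sum_le_sum fun i _ => ?_
        rw [abs_mul]
        nlinarith [hQbound i, abs_nonneg (hA.eigenvalues i), abs_nonneg ((Q i i).re)]
end Master

lemma exists_dual_sign {n : ℕ} {A : Matrix (Fin n) (Fin n) ℂ} (hA : A.IsHermitian) :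
    ∃ S : Matrix (Fin n) (Fin n) ℂ, ((1 : Matrix (Fin n) (Fin n) ℂ) - S).PosSemidef ∧
      ((1 : Matrix (Fin n) (Fin n) ℂ) + S).PosSemidef ∧
      (A * S).trace = (traceNorm A : ℂ) := by
  classical
  set V : Matrix (Fin n) (Fin n) ℂ := (hA.eigenvectorUnitary : Matrix (Fin n) (Fin n) ℂ) with hV
  have hVmem : V ∈ Matrix.unitaryGroup (Fin n) ℂ := (hA.eigenvectorUnitary).2
  have hVsV : star V * V = 1 := (Matrix.mem_unitaryGroup_iff').mp hVmem
  have hVVs : V * star V = 1 := (Matrix.mem_unitaryGroup_iff).mp hVmem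
  set D : Matrix (Fin n) (Fin n) ℂ :=
    Matrix.diagonal (RCLike.ofReal ∘ hA.eigenvalues) with hD
  have hspec : A = V * D * star V := hA.spectral_theorem
  set sgn : Fin n → ℝ := fun i => if 0 ≤ hA.eigenvalues i then 1 else -1 with hsgn
  refine ⟨V * Matrix.diagonal (fun i => (sgn i : ℂ)) * star V, ?_, ?_, ?_⟩
  · have he : (1 : Matrix (Fin n) (Fin n) ℂ) - V * Matrix.diagonal (fun i => (sgn i : ℂ)) * star V
        = V * Matrix.diagonal (fun i => ((1 - sgn i : ℝ) : ℂ)) * star V := by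
      have h1 : (Matrix.diagonal fun i => ((1 - sgn i : ℝ) : ℂ))
          = 1 - Matrix.diagonal (fun i => (sgn i : ℂ)) := by
        rw [← Matrix.diagonal_one, Matrix.diagonal_sub]
        congr 1; funext i; push_cast; ring
      rw [h1, Matrix.mul_sub, Matrix.mul_one, Matrix.sub_mul, hVVs]
    rw [he]
    have : (Matrix.diagonal (fun i => ((1 - sgn i : ℝ) : ℂ))).PosSemidef := by
      rw [Matrix.posSemidef_diagonal_iff]
      intro i
      rw [Complex.zero_le_real]
      by_cases h : 0 ≤ hA.eigenvalues i <;> norm_num [hsgn, h]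
    simpa [Matrix.star_eq_conjTranspose] using this.mul_mul_conjTranspose_same V
  · have he : (1 : Matrix (Fin n) (Fin n) ℂ) + V * Matrix.diagonal (fun i => (sgn i : ℂ)) * star V
        = V * Matrix.diagonal (fun i => ((1 + sgn i : ℝ) : ℂ)) * star V := by
      have h1 : (Matrix.diagonal fun i => ((1 + sgn i : ℝ) : ℂ))
          = 1 + Matrix.diagonal (fun i => (sgn i : ℂ)) := by
        rw [← Matrix.diagonal_one, Matrix.diagonal_add]
        congr 1; funext i; push_cast; ring
      rw [h1, Matrix.mul_add, Matrix.mul_one, Matrix.add_mul, hVVs]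
    rw [he]
    have : (Matrix.diagonal (fun i => ((1 + sgn i : ℝ) : ℂ))).PosSemidef := by
      rw [Matrix.posSemidef_diagonal_iff]
      intro i
      rw [Complex.zero_le_real]
      by_cases h : 0 ≤ hA.eigenvalues i <;> norm_num [hsgn, h]
    simpa [Matrix.star_eq_conjTranspose] using this.mul_mul_conjTranspose_same V
  · have hAS : A * (V * Matrix.diagonal (fun i => (sgn i : ℂ)) * star V)
        = V * (D * Matrix.diagonal (fun i => (sgn i : ℂ))) * star V := by
      rw [hspec]
      simp only [Matrix.mul_assoc, hVVs, Matrix.mul_one, hVsV]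
      rw [show star V * (V * (Matrix.diagonal (fun i => (sgn i : ℂ)) * star V))
          = star V * V * (Matrix.diagonal (fun i => (sgn i : ℂ)) * star V) by
        simp [Matrix.mul_assoc], hVsV, Matrix.one_mul]
    rw [hAS, Matrix.trace_mul_cycle, ← Matrix.mul_assoc, hVsV, Matrix.one_mul]
    rw [hD, Matrix.diagonal_mul_diagonal, Matrix.trace_diagonal]
    unfold traceNorm
    rw [dif_pos hA]
    push_cast
    refine Finset.sum_congr rfl fun i _ => ?_
    have hre : ((RCLike.ofReal ∘ hA.eigenvalues) i : ℂ) = ((hA.eigenvalues i : ℝ) : ℂ) := rfl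
    rw [hre, ← Complex.ofReal_mul]
    norm_cast
    rcases le_or_gt 0 (hA.eigenvalues i) with h | h
    · simp [hsgn, h, abs_of_nonneg h]
    · simp [hsgn, not_le.mpr h, abs_of_neg h]

lemma re_diag_le_one {n : ℕ} {S : Matrix (Fin n) (Fin n) ℂ}
    (h1 : ((1 : Matrix (Fin n) (Fin n) ℂ) - S).PosSemidef)
    (h2 : ((1 : Matrix (Fin n) (Fin n) ℂ) + S).PosSemidef) (i : Fin n) :
    |(S i i).re| ≤ 1 := by
  have b1 := psd_diag_re_nonneg h1 i
  have b2 := psd_diag_re_nonneg h2 i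
  rw [Matrix.sub_apply, Matrix.one_apply_eq, Complex.sub_re, Complex.one_re] at b1
  rw [Matrix.add_apply, Matrix.one_apply_eq, Complex.add_re, Complex.one_re] at b2
  rw [abs_le]; constructor <;> linarith

lemma isHermitian_diagonal_real {n : ℕ} (d : Fin n → ℝ) :
    (Matrix.diagonal (fun i => (d i : ℂ))).IsHermitian := by
  apply Matrix.isHermitian_diagonal_of_self_adjoint
  funext i
  simp [RCLike.star_def, Complex.conj_ofReal]

lemma traceNorm_smul_le {n : ℕ} {A : Matrix (Fin n) (Fin n) ℂ} (hA : A.IsHermitian) (c : ℝ) :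
    traceNorm ((c : ℂ) • A) ≤ |c| * traceNorm A := by
  have hB : ((c : ℂ) • A).IsHermitian := by
    unfold Matrix.IsHermitian at hA ⊢
    rw [Matrix.conjTranspose_smul, hA, RCLike.star_def, Complex.conj_ofReal]
  obtain ⟨S, h1, h2, hS⟩ := exists_dual_sign hB
  have htr : (((c : ℂ) • A) * S).trace = (c : ℂ) * (A * S).trace := by
    rw [Matrix.smul_mul, Matrix.trace_smul]; simp
  have : traceNorm ((c : ℂ) • A) = c * ((A * S).trace).re := by
    have := congrArg Complex.re hS
    rw [htr] at this
    simpa using this.symm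
  rw [this]
  calc c * ((A * S).trace).re ≤ |c * ((A * S).trace).re| := le_abs_self _
    _ = |c| * |((A * S).trace).re| := abs_mul _ _
    _ ≤ |c| * traceNorm A := by
        have := re_trace_mul_le hA h1 h2
        exact mul_le_mul_of_nonneg_left this (abs_nonneg c)

lemma traceNorm_diagonal_real {n : ℕ} (d : Fin n → ℝ) :
    traceNorm (Matrix.diagonal (fun i => (d i : ℂ))) = ∑ i, |d i| := by
  have hM : (Matrix.diagonal (fun i => (d i : ℂ))).IsHermitian := isHermitian_diagonal_real d
  apply le_antisymm
  · obtain ⟨S, h1, h2, hS⟩ := exists_dual_sign hM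
    have := congrArg Complex.re hS
    rw [trace_diagonal_mul] at this
    rw [Complex.ofReal_re, Complex.re_sum] at this
    rw [← this]
    calc ∑ i, ((d i : ℂ) * S i i).re = ∑ i, d i * (S i i).re := by
          refine Finset.sum_congr rfl fun i _ => ?_
          simp [Complex.mul_re]
      _ ≤ ∑ i, |d i| := by
          refine Finset.sum_le_sum fun i _ => ?_
          calc d i * (S i i).re ≤ |d i * (S i i).re| := le_abs_self _
            _ = |d i| * |(S i i).re| := abs_mul _ _
            _ ≤ |d i| * 1 := mul_le_mul_of_nonneg_left (re_diag_le_one h1 h2 i) (abs_nonneg _)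
            _ = |d i| := mul_one _
  · set sgn : Fin n → ℝ := fun i => if 0 ≤ d i then 1 else -1 with hsgn
    have h1 : ((1 : Matrix (Fin n) (Fin n) ℂ) - Matrix.diagonal (fun i => (sgn i : ℂ))).PosSemidef := by
      have he : ((1 : Matrix (Fin n) (Fin n) ℂ) - Matrix.diagonal (fun i => (sgn i : ℂ)))
          = Matrix.diagonal (fun i => ((1 - sgn i : ℝ) : ℂ)) := by
        rw [← Matrix.diagonal_one, Matrix.diagonal_sub]
        congr 1; funext i; push_cast; ring
      rw [he, Matrix.posSemidef_diagonal_iff]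
      intro i
      rw [Complex.zero_le_real]
      by_cases h : 0 ≤ d i <;> norm_num [hsgn, h]
    have h2 : ((1 : Matrix (Fin n) (Fin n) ℂ) + Matrix.diagonal (fun i => (sgn i : ℂ))).PosSemidef := by
      have he : ((1 : Matrix (Fin n) (Fin n) ℂ) + Matrix.diagonal (fun i => (sgn i : ℂ)))
          = Matrix.diagonal (fun i => ((1 + sgn i : ℝ) : ℂ)) := by
        rw [← Matrix.diagonal_one, Matrix.diagonal_add]
        congr 1; funext i; push_cast; ring
      rw [he, Matrix.posSemidef_diagonal_iff]
      intro i
      rw [Complex.zero_le_real]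
      by_cases h : 0 ≤ d i <;> norm_num [hsgn, h]
    have hle := re_trace_mul_le hM h1 h2
    have htr : ((Matrix.diagonal (fun i => (d i : ℂ)) * Matrix.diagonal (fun i => (sgn i : ℂ))).trace).re
        = ∑ i, |d i| := by
      rw [Matrix.diagonal_mul_diagonal, Matrix.trace_diagonal, Complex.re_sum]
      refine Finset.sum_congr rfl fun i _ => ?_
      rw [← Complex.ofReal_mul, Complex.ofReal_re]
      rcases le_or_gt 0 (d i) with h | h
      · simp [hsgn, h, abs_of_nonneg h]
      · simp [hsgn, not_le.mpr h, abs_of_neg h]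
    rw [htr] at hle
    have hnn : 0 ≤ ∑ i, |d i| := Finset.sum_nonneg fun i _ => abs_nonneg _
    rwa [abs_of_nonneg hnn] at hle

section Compute
variable {dA dB : ℕ}

lemma ptraceA_kron (E : Matrix (Fin dA) (Fin dA) ℂ) (M : Matrix (Fin dB) (Fin dB) ℂ) :
    ptraceA (E ⊗ₖ M) = E.trace • M := by
  ext i j
  simp [ptraceA, Matrix.trace, Matrix.diag, Finset.sum_mul]

lemma ptraceB_kron (E : Matrix (Fin dA) (Fin dA) ℂ) (M : Matrix (Fin dB) (Fin dB) ℂ) :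
    ptraceB (E ⊗ₖ M) = M.trace • E := by
  ext i j
  simp [ptraceB, Matrix.trace, Matrix.diag, Finset.sum_mul, Finset.mul_sum, mul_comm]

lemma ptraceA_add (M N : Matrix (Fin dA × Fin dB) (Fin dA × Fin dB) ℂ) :
    ptraceA (M + N) = ptraceA M + ptraceA N := by
  ext i j; simp [ptraceA, Finset.sum_add_distrib]

lemma ptraceB_add (M N : Matrix (Fin dA × Fin dB) (Fin dA × Fin dB) ℂ) :
    ptraceB (M + N) = ptraceB M + ptraceB N := by
  ext i j; simp [ptraceB, Finset.sum_add_distrib]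

lemma ptraceA_smul (c : ℂ) (M : Matrix (Fin dA × Fin dB) (Fin dA × Fin dB) ℂ) :
    ptraceA (c • M) = c • ptraceA M := by
  ext i j; simp [ptraceA, Finset.mul_sum]

lemma ptraceB_smul (c : ℂ) (M : Matrix (Fin dA × Fin dB) (Fin dA × Fin dB) ℂ) :
    ptraceB (c • M) = c • ptraceB M := by
  ext i j; simp [ptraceB, Finset.mul_sum]

lemma trace_stdBasis_mul (i : Fin dA) (P : Matrix (Fin dA) (Fin dA) ℂ) :
    (Matrix.single i i (1 : ℂ) * P).trace = P i i := by
  simp [Matrix.trace, Matrix.diag, Matrix.mul_apply, Matrix.single, Finset.sum_ite_eq, ite_and]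

lemma trace_stdBasis (i : Fin dA) :
    (Matrix.single i i (1 : ℂ)).trace = 1 := by
  simp [Matrix.trace, Matrix.diag, Matrix.single]

end Compute

section CQ
variable {dB : ℕ} (ρ' ρ'' : Matrix (Fin dB) (Fin dB) ℂ)

local notation "E0" => Matrix.single (0 : Fin 2) (0 : Fin 2) (1 : ℂ)
local notation "E1" => Matrix.single (1 : Fin 2) (1 : Fin 2) (1 : ℂ)
local notation "ρAB" => (1/2 : ℂ) • (E0 ⊗ₖ ρ' + E1 ⊗ₖ ρ'')

lemma mulQ (Q : Matrix (Fin dB) (Fin dB) ℂ) :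
    ρAB * ((1 : Matrix (Fin 2) (Fin 2) ℂ) ⊗ₖ Q)
      = (1/2 : ℂ) • (E0 ⊗ₖ (ρ' * Q) + E1 ⊗ₖ (ρ'' * Q)) := by
  rw [Matrix.smul_mul, Matrix.add_mul, ← Matrix.mul_kronecker_mul, ← Matrix.mul_kronecker_mul,
    Matrix.mul_one, Matrix.mul_one]

lemma mulP (P : Matrix (Fin 2) (Fin 2) ℂ) :
    ρAB * (P ⊗ₖ (1 : Matrix (Fin dB) (Fin dB) ℂ))
      = (1/2 : ℂ) • ((E0 * P) ⊗ₖ ρ' + (E1 * P) ⊗ₖ ρ'') := by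
  rw [Matrix.smul_mul, Matrix.add_mul, ← Matrix.mul_kronecker_mul, ← Matrix.mul_kronecker_mul,
    Matrix.mul_one, Matrix.mul_one]

lemma postB (Q : Matrix (Fin dB) (Fin dB) ℂ) :
    (2 : ℂ) • ptraceB (ρAB * ((1 : Matrix (Fin 2) (Fin 2) ℂ) ⊗ₖ Q))
      = (ρ' * Q).trace • E0 + (ρ'' * Q).trace • E1 := by
  rw [mulQ, ptraceB_smul, ptraceB_add, ptraceB_kron, ptraceB_kron, smul_smul]
  norm_num

lemma postA (P : Matrix (Fin 2) (Fin 2) ℂ) :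
    (2 : ℂ) • ptraceA (ρAB * (P ⊗ₖ (1 : Matrix (Fin dB) (Fin dB) ℂ)))
      = P 0 0 • ρ' + P 1 1 • ρ'' := by
  rw [mulP, ptraceA_smul, ptraceA_add, ptraceA_kron, ptraceA_kron, smul_smul,
    trace_stdBasis_mul, trace_stdBasis_mul]
  norm_num

lemma traceQ (Q : Matrix (Fin dB) (Fin dB) ℂ) :
    (ρAB * ((1 : Matrix (Fin 2) (Fin 2) ℂ) ⊗ₖ Q)).trace
      = (1/2 : ℂ) * ((ρ' * Q).trace + (ρ'' * Q).trace) := by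
  rw [mulQ, Matrix.trace_smul, Matrix.trace_add, Matrix.trace_kronecker, Matrix.trace_kronecker,
    trace_stdBasis, trace_stdBasis]
  simp

lemma traceP (hρ' : ρ'.trace = 1) (hρ'' : ρ''.trace = 1) (P : Matrix (Fin 2) (Fin 2) ℂ) :
    (ρAB * (P ⊗ₖ (1 : Matrix (Fin dB) (Fin dB) ℂ))).trace
      = (1/2 : ℂ) * (P 0 0 + P 1 1) := by
  rw [mulP, Matrix.trace_smul, Matrix.trace_add, Matrix.trace_kronecker, Matrix.trace_kronecker,
    trace_stdBasis_mul, trace_stdBasis_mul, hρ', hρ'']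
  simp

end CQ

lemma trace_mul_herm_real {n : ℕ} {M N : Matrix (Fin n) (Fin n) ℂ}
    (hM : M.IsHermitian) (hN : N.IsHermitian) :
    ((M * N).trace : ℂ) = (((M * N).trace).re : ℂ) := by
  have : (starRingEnd ℂ) ((M * N).trace) = (M * N).trace := by
    calc (starRingEnd ℂ) ((M * N).trace) = ((M * N)ᴴ).trace := by
          rw [Matrix.trace_conjTranspose]; rfl
      _ = (Nᴴ * Mᴴ).trace := by rw [Matrix.conjTranspose_mul]
      _ = (N * M).trace := by rw [hM, hN]
      _ = (M * N).trace := Matrix.trace_mul_comm _ _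
  exact (Complex.conj_eq_iff_re.mp this).symm

lemma psd_diag_nonneg {n : ℕ} {M : Matrix (Fin n) (Fin n) ℂ}
    (h : M.PosSemidef) (i : Fin n) : 0 ≤ M i i := by
  have := h.dotProduct_mulVec_nonneg (Pi.single i 1)
  simpa [dotProduct, Matrix.mulVec, Pi.single_apply] using this

section Main
variable {dB : ℕ} (ρ' ρ'' : Matrix (Fin dB) (Fin dB) ℂ)

local notation "E0" => Matrix.single (0 : Fin 2) (0 : Fin 2) (1 : ℂ)
local notation "E1" => Matrix.single (1 : Fin 2) (1 : Fin 2) (1 : ℂ)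
local notation "ρAB" => (1/2 : ℂ) • (E0 ⊗ₖ ρ' + E1 ⊗ₖ ρ'')

lemma main1 (h'h : ρ'.PosSemidef) (h't : ρ'.trace = 1)
    (h''h : ρ''.PosSemidef) (h''t : ρ''.trace = 1)
    (PB : Matrix (Fin dB) (Fin dB) ℂ) (hP : PB.PosSemidef)
    (h1P : ((1 : Matrix (Fin dB) (Fin dB) ℂ) - PB).PosSemidef)
    (htr : (((1/2 : ℂ) • (ρ' + ρ'')) * PB).trace = 1/2) :
    traceNorm ((2 : ℂ) • ptraceB (ρAB * ((1 : Matrix (Fin 2) (Fin 2) ℂ) ⊗ₖ PB))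
        - (2 : ℂ) • ptraceB (ρAB * ((1 : Matrix (Fin 2) (Fin 2) ℂ) ⊗ₖ
            ((1 : Matrix (Fin dB) (Fin dB) ℂ) - PB))))
      = 2 * |(((ρ' - ρ'') * PB).trace).re| ∧
    traceNorm ((2 : ℂ) • ptraceB (ρAB * ((1 : Matrix (Fin 2) (Fin 2) ℂ) ⊗ₖ PB))
        - (2 : ℂ) • ptraceB (ρAB * ((1 : Matrix (Fin 2) (Fin 2) ℂ) ⊗ₖ
            ((1 : Matrix (Fin dB) (Fin dB) ℂ) - PB))))
      ≤ traceNorm (ρ' - ρ'') := by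
  set tp := (ρ' * PB).trace with htp
  set tpp := (ρ'' * PB).trace with htpp
  have hsum : tp + tpp = 1 := by
    rw [Matrix.smul_mul, Matrix.trace_smul, Matrix.add_mul, Matrix.trace_add] at htr
    have : (1/2 : ℂ) * (tp + tpp) = 1/2 := by
      simpa [smul_eq_mul, mul_add] using htr
    linear_combination 2 * this
  set c : ℂ := ((ρ' - ρ'') * PB).trace with hcdef
  have hc : c = tp - tpp := by rw [hcdef, Matrix.sub_mul, Matrix.trace_sub]
  set r : ℝ := c.re with hr
  have hcr : c = (r : ℂ) := by
    rw [hr, hcdef]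
    exact trace_mul_herm_real (h'h.1.sub h''h.1) hP.1
  have hdiff : (2 : ℂ) • ptraceB (ρAB * ((1 : Matrix (Fin 2) (Fin 2) ℂ) ⊗ₖ PB))
      - (2 : ℂ) • ptraceB (ρAB * ((1 : Matrix (Fin 2) (Fin 2) ℂ) ⊗ₖ
          ((1 : Matrix (Fin dB) (Fin dB) ℂ) - PB)))
      = Matrix.diagonal (fun i => ((![r, -r] : Fin 2 → ℝ) i : ℂ)) := by
    rw [postB, postB]
    have e1 : (ρ' * ((1 : Matrix (Fin dB) (Fin dB) ℂ) - PB)).trace = 1 - tp := by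
      rw [Matrix.mul_sub, Matrix.mul_one, Matrix.trace_sub, h't, htp]
    have e2 : (ρ'' * ((1 : Matrix (Fin dB) (Fin dB) ℂ) - PB)).trace = 1 - tpp := by
      rw [Matrix.mul_sub, Matrix.mul_one, Matrix.trace_sub, h''t, htpp]
    rw [e1, e2]
    have htpp1 : tpp = 1 - tp := by linear_combination hsum
    have hrtp : (r : ℂ) = 2 * tp - 1 := by rw [← hcr, hc, htpp1]; ring
    ext i j
    fin_cases i <;> fin_cases j <;>
      simp [Matrix.single, Matrix.diagonal, ← htp, ← htpp, hrtp, htpp1] <;>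
      ring
  rw [hdiff, traceNorm_diagonal_real]
  have hvs : ∑ i, |(![r, -r] : Fin 2 → ℝ) i| = 2 * |r| := by
    rw [Fin.sum_univ_two]
    simp [abs_neg]
    ring
  rw [hvs]
  refine ⟨rfl, ?_⟩
  -- inequality
  set S : Matrix (Fin dB) (Fin dB) ℂ := PB - ((1 : Matrix (Fin dB) (Fin dB) ℂ) - PB) with hS
  have h1S : ((1 : Matrix (Fin dB) (Fin dB) ℂ) - S).PosSemidef := by
    have he : (1 : Matrix (Fin dB) (Fin dB) ℂ) - S
        = ((1 : Matrix (Fin dB) (Fin dB) ℂ) - PB) + ((1 : Matrix (Fin dB) (Fin dB) ℂ) - PB) := by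
      rw [hS]; abel
    rw [he]; exact h1P.add h1P
  have h2S : ((1 : Matrix (Fin dB) (Fin dB) ℂ) + S).PosSemidef := by
    have he : (1 : Matrix (Fin dB) (Fin dB) ℂ) + S = PB + PB := by
      rw [hS]; abel
    rw [he]; exact hP.add hP
  have hΔ : (ρ' - ρ'').IsHermitian := h'h.1.sub h''h.1
  have htrΔ : (ρ' - ρ'').trace = 0 := by rw [Matrix.trace_sub, h't, h''t, sub_self]
  have htrS : ((ρ' - ρ'') * S).trace = 2 * c := by
    rw [hS, Matrix.mul_sub, Matrix.trace_sub, Matrix.mul_sub, Matrix.mul_one, Matrix.trace_sub,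
      htrΔ, ← hcdef]
    ring
  have hle := re_trace_mul_le hΔ h1S h2S
  rw [htrS] at hle
  have : |((2 : ℂ) * c).re| = 2 * |r| := by
    rw [hcr]
    norm_cast
    rw [abs_mul]
    norm_num
  rwa [this] at hle
end Main

section Main2
variable {dB : ℕ} (ρ' ρ'' : Matrix (Fin dB) (Fin dB) ℂ)

local notation "E0" => Matrix.single (0 : Fin 2) (0 : Fin 2) (1 : ℂ)
local notation "E1" => Matrix.single (1 : Fin 2) (1 : Fin 2) (1 : ℂ)
local notation "ρAB" => (1/2 : ℂ) • (E0 ⊗ₖ ρ' + E1 ⊗ₖ ρ'')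

lemma E0_psd : (Matrix.single (0 : Fin 2) (0 : Fin 2) (1 : ℂ)).PosSemidef := by
  have he : Matrix.single (0 : Fin 2) (0 : Fin 2) (1 : ℂ)
      = Matrix.diagonal ![1, 0] := by
    ext i j; fin_cases i <;> fin_cases j <;> simp [Matrix.single, Matrix.diagonal]
  rw [he, Matrix.posSemidef_diagonal_iff]
  intro i; fin_cases i <;> norm_num

lemma E1_psd : (Matrix.single (1 : Fin 2) (1 : Fin 2) (1 : ℂ)).PosSemidef := by
  have he : Matrix.single (1 : Fin 2) (1 : Fin 2) (1 : ℂ)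
      = Matrix.diagonal ![0, 1] := by
    ext i j; fin_cases i <;> fin_cases j <;> simp [Matrix.single, Matrix.diagonal]
  rw [he, Matrix.posSemidef_diagonal_iff]
  intro i; fin_cases i <;> norm_num

lemma E0_add_E1 : Matrix.single (0 : Fin 2) (0 : Fin 2) (1 : ℂ)
    + Matrix.single (1 : Fin 2) (1 : Fin 2) (1 : ℂ) = 1 := by
  ext i j; fin_cases i <;> fin_cases j <;> simp [Matrix.single, Matrix.one_apply]

lemma ca2_mem (h't : ρ'.trace = 1) (h''t : ρ''.trace = 1) :
    traceNorm (ρ' - ρ'') / 4 ∈ { x : ℝ | ∃ P₁ P₂ : Matrix (Fin 2) (Fin 2) ℂ,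
    P₁.PosSemidef ∧ P₂.PosSemidef ∧ P₁ + P₂ = 1 ∧
    (ρAB * (P₁ ⊗ₖ (1 : Matrix (Fin dB) (Fin dB) ℂ))).trace = 1/2 ∧
    (ρAB * (P₂ ⊗ₖ (1 : Matrix (Fin dB) (Fin dB) ℂ))).trace = 1/2 ∧
    x = traceNorm ((2 : ℂ) • ptraceA (ρAB * (P₁ ⊗ₖ (1 : Matrix (Fin dB) (Fin dB) ℂ)))
          - (2 : ℂ) • ptraceA (ρAB * (P₂ ⊗ₖ (1 : Matrix (Fin dB) (Fin dB) ℂ)))) / 4 } := by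
  refine ⟨E0, E1, E0_psd, E1_psd, E0_add_E1, ?_, ?_, ?_⟩
  · rw [traceP ρ' ρ'' h't h''t]
    simp [Matrix.single]
  · rw [traceP ρ' ρ'' h't h''t]
    simp [Matrix.single]
  · have e : (2 : ℂ) • ptraceA (ρAB * (E0 ⊗ₖ (1 : Matrix (Fin dB) (Fin dB) ℂ)))
        - (2 : ℂ) • ptraceA (ρAB * (E1 ⊗ₖ (1 : Matrix (Fin dB) (Fin dB) ℂ))) = ρ' - ρ'' := by
      rw [postA, postA]
      simp [Matrix.single]
    rw [e]

lemma ca2_upper (h'h : ρ'.PosSemidef) (h't : ρ'.trace = 1)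
    (h''h : ρ''.PosSemidef) (h''t : ρ''.trace = 1) :
    ∀ x ∈ { x : ℝ | ∃ P₁ P₂ : Matrix (Fin 2) (Fin 2) ℂ,
    P₁.PosSemidef ∧ P₂.PosSemidef ∧ P₁ + P₂ = 1 ∧
    (ρAB * (P₁ ⊗ₖ (1 : Matrix (Fin dB) (Fin dB) ℂ))).trace = 1/2 ∧
    (ρAB * (P₂ ⊗ₖ (1 : Matrix (Fin dB) (Fin dB) ℂ))).trace = 1/2 ∧
    x = traceNorm ((2 : ℂ) • ptraceA (ρAB * (P₁ ⊗ₖ (1 : Matrix (Fin dB) (Fin dB) ℂ)))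
          - (2 : ℂ) • ptraceA (ρAB * (P₂ ⊗ₖ (1 : Matrix (Fin dB) (Fin dB) ℂ)))) / 4 },
      x ≤ traceNorm (ρ' - ρ'') / 4 := by
  rintro x ⟨P₁, P₂, hP1, hP2, hsum12, ht1, ht2, hx⟩
  have hP2e : P₂ = 1 - P₁ := eq_sub_of_add_eq' hsum12
  set p := P₁ 0 0 with hp
  set q := P₁ 1 1 with hq
  have hpq : p + q = 1 := by
    rw [traceP ρ' ρ'' h't h''t] at ht1
    linear_combination 2 * ht1
  have hppos : 0 ≤ p := psd_diag_nonneg hP1 0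
  have hqpos : 0 ≤ q := psd_diag_nonneg hP1 1
  have h1P : ((1 : Matrix (Fin 2) (Fin 2) ℂ) - P₁).PosSemidef := hP2e ▸ hP2
  have hple : 0 ≤ ((1 : Matrix (Fin 2) (Fin 2) ℂ) - P₁) 0 0 := psd_diag_nonneg h1P 0
  have hqle : 0 ≤ ((1 : Matrix (Fin 2) (Fin 2) ℂ) - P₁) 1 1 := psd_diag_nonneg h1P 1
  rw [Matrix.sub_apply, Matrix.one_apply_eq] at hple hqle
  rw [Complex.nonneg_iff] at hppos hqpos
  rw [Complex.nonneg_iff, Complex.sub_re, Complex.sub_im, Complex.one_re, Complex.one_im]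
    at hple hqle
  set s : ℝ := p.re - q.re with hs
  have hsc : (s : ℂ) = p - q := by
    apply Complex.ext <;> simp [hs, ← hppos.2, ← hqpos.2]
  have habs : |s| ≤ 1 := by
    rw [abs_le]; constructor <;> · simp only [hs]; linarith [hple.1, hqle.1, hppos.1, hqpos.1]
  have hdiff : (2 : ℂ) • ptraceA (ρAB * (P₁ ⊗ₖ (1 : Matrix (Fin dB) (Fin dB) ℂ)))
      - (2 : ℂ) • ptraceA (ρAB * (P₂ ⊗ₖ (1 : Matrix (Fin dB) (Fin dB) ℂ)))
      = (s : ℂ) • (ρ' - ρ'') := by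
    rw [postA, postA, hP2e]
    rw [Matrix.sub_apply, Matrix.one_apply_eq, Matrix.sub_apply, Matrix.one_apply_eq]
    rw [hsc]
    have hq1 : q = 1 - p := by linear_combination hpq
    rw [← hp, ← hq, hq1]
    module
  rw [hx, hdiff]
  have hb := traceNorm_smul_le (h'h.1.sub h''h.1) s
  have : |s| * traceNorm (ρ' - ρ'') ≤ traceNorm (ρ' - ρ'') := by
    nlinarith [traceNorm_nonneg (ρ' - ρ'')]
  linarith
end Main2

section Main3
variable {dB : ℕ} (ρ' ρ'' : Matrix (Fin dB) (Fin dB) ℂ)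

local notation "E0" => Matrix.single (0 : Fin 2) (0 : Fin 2) (1 : ℂ)
local notation "E1" => Matrix.single (1 : Fin 2) (1 : Fin 2) (1 : ℂ)
local notation "ρAB" => (1/2 : ℂ) • (E0 ⊗ₖ ρ' + E1 ⊗ₖ ρ'')

lemma ca2_eq (h'h : ρ'.PosSemidef) (h't : ρ'.trace = 1)
    (h''h : ρ''.PosSemidef) (h''t : ρ''.trace = 1) :
    CA2 ρAB = traceNorm (ρ' - ρ'') / 4 := by
  apply le_antisymm
  · apply Real.sSup_le
    · exact ca2_upper ρ' ρ'' h'h h't h''h h''t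
    · have := traceNorm_nonneg (ρ' - ρ'')
      linarith
  · apply le_csSup
    · exact ⟨traceNorm (ρ' - ρ'') / 4, fun x hx => ca2_upper ρ' ρ'' h'h h't h''h h''t x hx⟩
    · exact ca2_mem ρ' ρ'' h't h''t

lemma cb2_le_ca2 (h'h : ρ'.PosSemidef) (h't : ρ'.trace = 1)
    (h''h : ρ''.PosSemidef) (h''t : ρ''.trace = 1) :
    CB2 ρAB ≤ CA2 ρAB := by
  rw [ca2_eq ρ' ρ'' h'h h't h''h h''t]
  apply Real.sSup_le
  · rintro x ⟨Q₁, Q₂, hQ1, hQ2, hsum12, ht1, ht2, hx⟩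
    have hQ2e : Q₂ = 1 - Q₁ := eq_sub_of_add_eq' hsum12
    have htr' : (((1/2 : ℂ) • (ρ' + ρ'')) * Q₁).trace = 1/2 := by
      have he : (((1/2 : ℂ) • (ρ' + ρ'')) * Q₁).trace
          = (1/2 : ℂ) * ((ρ' * Q₁).trace + (ρ'' * Q₁).trace) := by
        rw [Matrix.smul_mul, Matrix.trace_smul, Matrix.add_mul, Matrix.trace_add]
        simp
      rw [he, ← traceQ]
      exact ht1
    have h1Q : ((1 : Matrix (Fin dB) (Fin dB) ℂ) - Q₁).PosSemidef := hQ2e ▸ hQ2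
    have hm := (main1 ρ' ρ'' h'h h't h''h h''t Q₁ hQ1 h1Q htr').2
    rw [hx, hQ2e]
    linarith
  · have := traceNorm_nonneg (ρ' - ρ'')
    linarith
end Main3


/-- For the classical-quantum state
`ρ_{AB} = (1/2)(|0⟩⟨0|_A ⊗ ρ'_B + |1⟩⟨1|_A ⊗ ρ''_B)` and any maximally entropic
two-outcome POVM `{P_B, 1 - P_B}` on `B`, the post-measurement states on `A` satisfy
`‖ρ_{A,1} - ρ_{A,2}‖₁ = 2|Tr((ρ'_B - ρ''_B)P_B)| ≤ ‖ρ'_B - ρ''_B‖₁`; consequently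
`C_B^{(2)}(ρ_{AB}) ≤ C_A^{(2)}(ρ_{AB}) = ‖ρ'_B - ρ''_B‖₁ / 4`. -/
theorem CB2_le_CA2_classical_quantum (dB : ℕ)
    (ρ' ρ'' : Matrix (Fin dB) (Fin dB) ℂ)
    (h' : IsDensity ρ') (h'' : IsDensity ρ'') :
    let ρAB : Matrix (Fin 2 × Fin dB) (Fin 2 × Fin dB) ℂ :=
      (1/2 : ℂ) • (Matrix.single (0 : Fin 2) 0 (1 : ℂ) ⊗ₖ ρ'
        + Matrix.single (1 : Fin 2) 1 (1 : ℂ) ⊗ₖ ρ'')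
    (∀ PB : Matrix (Fin dB) (Fin dB) ℂ,
      PB.PosSemidef → ((1 : Matrix (Fin dB) (Fin dB) ℂ) - PB).PosSemidef →
      (((1/2 : ℂ) • (ρ' + ρ'')) * PB).trace = 1/2 →
      traceNorm ((2 : ℂ) • ptraceB (ρAB * ((1 : Matrix (Fin 2) (Fin 2) ℂ) ⊗ₖ PB))
          - (2 : ℂ) • ptraceB (ρAB * ((1 : Matrix (Fin 2) (Fin 2) ℂ) ⊗ₖ
              ((1 : Matrix (Fin dB) (Fin dB) ℂ) - PB))))
        = 2 * |(((ρ' - ρ'') * PB).trace).re| ∧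
      traceNorm ((2 : ℂ) • ptraceB (ρAB * ((1 : Matrix (Fin 2) (Fin 2) ℂ) ⊗ₖ PB))
          - (2 : ℂ) • ptraceB (ρAB * ((1 : Matrix (Fin 2) (Fin 2) ℂ) ⊗ₖ
              ((1 : Matrix (Fin dB) (Fin dB) ℂ) - PB))))
        ≤ traceNorm (ρ' - ρ'')) ∧
    CB2 ρAB ≤ CA2 ρAB ∧
    CA2 ρAB = traceNorm (ρ' - ρ'') / 4 := by
  intro ρAB
  refine ⟨?_, ?_, ?_⟩
  · intro PB hP h1P htr
    exact main1 ρ' ρ'' h'.1 h'.2 h''.1 h''.2 PB hP h1P htr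
  · exact cb2_le_ca2 ρ' ρ'' h'.1 h'.2 h''.1 h''.2
  · exact ca2_eq ρ' ρ'' h'.1 h'.2 h''.1 h''.2
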